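/- Let γ ≥ 0, ρ₂ > 0, and A ∈ ℝ^{n×d} with singular value decomposition A = U Σ Vᵀ, Σ = diag(σ₁,…,σ_l) containing the positive singular values. Then the unique minimizer of the function W̃ ↦ γ‖W̃‖_* + (ρ₂/2)‖W̃ − A‖_F² over ℝ^{n×d} is U · diag(max{σ₁ − γ/ρ₂, 0}, …, max{σ_l − γ/ρ₂, 0}) · Vᵀ, i.e., singular value soft-thresholding of A at level γ/ρ₂. -/

import Mathlib

open Matrix BigOperators Finset Filter

/-- Squared Frobenius norm. -/
noncomputable def frobSq {m n : ℕ} (A : Matrix (Fin m) (Fin n) ℝ) : ℝ :=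
  ∑ i, ∑ j, (A i j) ^ 2

/-- Frobenius norm. -/
noncomputable def frob {m n : ℕ} (A : Matrix (Fin m) (Fin n) ℝ) : ℝ :=
  Real.sqrt (frobSq A)

/-- Entrywise ℓ₁ norm. -/
noncomputable def l1 {m n : ℕ} (A : Matrix (Fin m) (Fin n) ℝ) : ℝ :=
  ∑ i, ∑ j, |A i j|

/-- ℓ_{2,1} norm: sum of Euclidean norms of the rows. -/
noncomputable def l21 {m n : ℕ} (A : Matrix (Fin m) (Fin n) ℝ) : ℝ :=
  ∑ i, Real.sqrt (∑ j, (A i j) ^ 2)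

/-- Nuclear norm: sum of singular values (square roots of eigenvalues of AᵀA). -/
noncomputable def nuclearNorm {m n : ℕ} (A : Matrix (Fin m) (Fin n) ℝ) : ℝ :=
  ∑ i, Real.sqrt ((Matrix.isHermitian_conjTranspose_mul_self A).eigenvalues i)

/-- Matrix inner product ⟨P,Q⟩ = tr(PᵀQ). -/
noncomputable def minner {m n : ℕ} (A B : Matrix (Fin m) (Fin n) ℝ) : ℝ :=
  ∑ i, ∑ j, A i j * B i j

/-- ℓ_{2,0}: number of nonzero rows. -/
noncomputable def l20 {m n : ℕ} (A : Matrix (Fin m) (Fin n) ℝ) : ℕ :=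
  {i | A i ≠ 0}.ncard

lemma cs_sqrt {ι : Type*} [Fintype ι] (f g : ι → ℝ) :
    ∑ i, f i * g i ≤ Real.sqrt (∑ i, (f i)^2) * Real.sqrt (∑ i, (g i)^2) := by
  have h := Finset.sum_mul_sq_le_sq_mul_sq Finset.univ f g
  rw [← Real.sqrt_mul (by positivity)]
  calc ∑ i, f i * g i ≤ Real.sqrt ((∑ i, f i * g i)^2) := by
        rw [Real.sqrt_sq_eq_abs]; exact le_abs_self _
    _ ≤ Real.sqrt ((∑ i, (f i)^2) * ∑ i, (g i)^2) := Real.sqrt_le_sqrt h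

lemma cs_abs_le_one {ι : Type*} [Fintype ι] (f g : ι → ℝ)
    (hf : ∑ i, (f i)^2 ≤ 1) (hg : ∑ i, (g i)^2 ≤ 1) :
    ∑ i, |f i| * |g i| ≤ 1 := by
  have h := cs_sqrt (fun i => |f i|) (fun i => |g i|)
  simp only [sq_abs] at h
  calc ∑ i, |f i| * |g i| ≤ Real.sqrt (∑ i, (f i)^2) * Real.sqrt (∑ i, (g i)^2) := h
    _ ≤ 1 * 1 := by
        gcongr
        · exact Real.sqrt_le_one.mpr hf
        · exact Real.sqrt_le_one.mpr hg
    _ = 1 := by ring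

lemma bessel {ι κ : Type*} [Fintype ι] [Fintype κ] (u : ι → κ → ℝ)
    (horth : ∀ i j, i ≠ j → ∑ k, u i k * u j k = 0)
    (hnorm : ∀ i, ∑ k, (u i k)^2 ≤ 1) (x : κ → ℝ) :
    ∑ i, (∑ k, x k * u i k)^2 ≤ ∑ k, (x k)^2 := by
  set c : ι → ℝ := fun i => ∑ k, x k * u i k with hc
  have key : 0 ≤ ∑ k, (x k - ∑ i, c i * u i k)^2 := by positivity
  have e2 : ∑ k, x k * ∑ i, c i * u i k = ∑ i, (c i)^2 := by
    simp_rw [Finset.mul_sum]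
    rw [Finset.sum_comm]
    refine Finset.sum_congr rfl (fun i _ => ?_)
    have : ∑ k, x k * (c i * u i k) = c i * ∑ k, x k * u i k := by
      rw [Finset.mul_sum]; exact Finset.sum_congr rfl (fun k _ => by ring)
    rw [this, show (∑ k, x k * u i k) = c i from rfl, pow_two]
  have e3 : ∑ k, (∑ i, c i * u i k)^2 ≤ ∑ i, (c i)^2 := by
    have step : ∑ k, (∑ i, c i * u i k)^2
        = ∑ i, (c i)^2 * ∑ k, (u i k)^2 := by
      simp_rw [pow_two, Finset.sum_mul_sum]
      rw [Finset.sum_comm]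
      refine Finset.sum_congr rfl (fun i _ => ?_)
      rw [Finset.sum_comm]
      rw [Finset.sum_eq_single i]
      · rw [Finset.mul_sum]; exact Finset.sum_congr rfl (fun k _ => by ring)
      · intro j _ hji
        have h0 := horth i j (Ne.symm hji)  -- careful direction
        calc ∑ k, c i * u i k * (c j * u j k)
            = c i * c j * ∑ k, u i k * u j k := by
              rw [Finset.mul_sum]; exact Finset.sum_congr rfl (fun k _ => by ring)
          _ = 0 := by rw [h0]; ring
      · intro hi; exact absurd (Finset.mem_univ i) hi
    rw [step]
    calc ∑ i, (c i)^2 * ∑ k, (u i k)^2 ≤ ∑ i, (c i)^2 * 1 := by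
          refine Finset.sum_le_sum (fun i _ => ?_)
          exact mul_le_mul_of_nonneg_left (hnorm i) (by positivity)
      _ = ∑ i, (c i)^2 := by simp
  have expand : ∑ k, (x k - ∑ i, c i * u i k)^2
      = ∑ k, (x k)^2 - 2 * ∑ i, (c i)^2 + ∑ k, (∑ i, c i * u i k)^2 := by
    have e1 : ∀ k ∈ Finset.univ, (x k - ∑ i, c i * u i k)^2
        = (x k)^2 - 2 * (x k * ∑ i, c i * u i k) + (∑ i, c i * u i k)^2 :=
      fun k _ => by ring
    rw [Finset.sum_congr rfl e1, Finset.sum_add_distrib, Finset.sum_sub_distrib,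
      ← Finset.mul_sum, e2]
  rw [expand] at key
  nlinarith [e3]


lemma svd_core {n d : ℕ} (W : Matrix (Fin n) (Fin d) ℝ) :
    ∃ (v : Fin d → Fin d → ℝ) (u : Fin d → Fin n → ℝ) (s : Fin d → ℝ),
      (∀ i, 0 ≤ s i) ∧
      (∀ i i', i ≠ i' → ∑ j, v i j * v i' j = 0) ∧
      (∀ i, ∑ j, (v i j)^2 ≤ 1) ∧
      (∀ i i', i ≠ i' → ∑ j, u i j * u i' j = 0) ∧
      (∀ i, ∑ j, (u i j)^2 ≤ 1) ∧
      (∀ j k, W j k = ∑ i, s i * u i j * v i k) ∧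
      (∀ i, s i = ∑ j, ∑ k, u i j * (W j k * v i k)) ∧
      nuclearNorm W = ∑ i, s i := by
  set h := Matrix.isHermitian_conjTranspose_mul_self W with hh
  set Q : Matrix (Fin d) (Fin d) ℝ := (h.eigenvectorUnitary : Matrix (Fin d) (Fin d) ℝ) with hQ
  set μ : Fin d → ℝ := h.eigenvalues with hμ
  set v : Fin d → Fin d → ℝ := fun i a => Q a i with hv
  -- column orthonormality of Q (i.e. of the v's)
  have hstar : star Q = Qᵀ := by
    ext a b; simp [Matrix.star_apply]
  have hQcol : ∀ i i', ∑ a, v i a * v i' a = if i = i' then 1 else 0 := by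
    intro i i'
    have h1 : star Q * Q = 1 := Matrix.mem_unitaryGroup_iff'.mp h.eigenvectorUnitary.2
    have := congrFun (congrFun (hstar ▸ h1) i) i'
    simpa [Matrix.mul_apply, Matrix.one_apply, hv] using this
  have hQrow : ∀ a b, ∑ i, v i a * v i b = if a = b then 1 else 0 := by
    intro a b
    have h1 : Q * star Q = 1 := Matrix.mem_unitaryGroup_iff.mp h.eigenvectorUnitary.2
    have := congrFun (congrFun (hstar ▸ h1) a) b
    simpa [Matrix.mul_apply, Matrix.one_apply, hv] using this
  -- eigenvector property
  have hmul : ∀ i, (Wᵀ * W) *ᵥ (v i) = μ i • (v i) := by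
    intro i
    have h1 := h.mulVec_eigenvectorBasis i
    have h2 : v i = (WithLp.equiv 2 _) (h.eigenvectorBasis i) := by
      funext a
      exact h.eigenvectorUnitary_apply a i
    rw [h2]
    exact h1
  set w : Fin d → Fin n → ℝ := fun i => W *ᵥ (v i) with hw
  have F1 : ∀ i i', ∑ j, w i j * w i' j = μ i' * (if i = i' then 1 else 0) := by
    intro i i'
    have swap : ∑ j, w i j * w i' j = ∑ k, v i k * ((Wᵀ * W) *ᵥ (v i')) k := by
      have : ∀ j, w i j * w i' j = ∑ k, W j k * v i k * w i' j := by
        intro j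
        rw [← Finset.sum_mul]
        rfl
      rw [Finset.sum_congr rfl (fun j _ => this j), Finset.sum_comm]
      refine Finset.sum_congr rfl (fun k _ => ?_)
      have : ((Wᵀ * W) *ᵥ (v i')) k = ∑ j, W j k * w i' j := by
        rw [← Matrix.mulVec_mulVec]
        simp [Matrix.mulVec, dotProduct, Matrix.transpose_apply, hw]
      rw [this, Finset.mul_sum]
      exact Finset.sum_congr rfl (fun j _ => by ring)
    rw [swap, hmul i']
    simp only [Pi.smul_apply, smul_eq_mul]
    rw [← hQcol i i', Finset.mul_sum]
    exact Finset.sum_congr rfl (fun k _ => by ring)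
  have hμ0 : ∀ i, 0 ≤ μ i := by
    intro i
    have := F1 i i
    rw [if_pos rfl, mul_one] at this
    rw [← this]
    exact Finset.sum_nonneg fun j _ => mul_self_nonneg _
  set s : Fin d → ℝ := fun i => Real.sqrt (μ i) with hs
  have hs0 : ∀ i, 0 ≤ s i := fun i => Real.sqrt_nonneg _
  have hssq : ∀ i, s i ^ 2 = μ i := fun i => Real.sq_sqrt (hμ0 i)
  have hw0 : ∀ i, μ i = 0 → ∀ j, w i j = 0 := by
    intro i h0 j
    have h1 : ∑ j, w i j * w i j = 0 := by rw [F1 i i, h0]; ring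
    have h2 : ∀ j ∈ Finset.univ, (0:ℝ) ≤ w i j * w i j := fun j _ => mul_self_nonneg _
    have := (Finset.sum_eq_zero_iff_of_nonneg h2).mp h1 j (Finset.mem_univ j)
    nlinarith [this]
  set u : Fin d → Fin n → ℝ := fun i j => if μ i = 0 then 0 else w i j / s i with hu
  have hspos : ∀ i, μ i ≠ 0 → 0 < s i := by
    intro i hi
    exact Real.sqrt_pos.mpr (lt_of_le_of_ne (hμ0 i) (Ne.symm hi))
  have hsu : ∀ i j, w i j = s i * u i j := by
    intro i j
    by_cases h0 : μ i = 0
    · simp [hu, h0, hw0 i h0 j]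
    · simp only [hu, if_neg h0]
      rw [eq_comm, mul_comm, div_mul_cancel₀ _ (ne_of_gt (hspos i h0))]
  have hunorm : ∀ i, ∑ j, (u i j)^2 = if μ i = 0 then 0 else 1 := by
    intro i
    by_cases h0 : μ i = 0
    · simp [hu, h0]
    · simp only [hu, if_neg h0, div_pow]
      rw [← Finset.sum_div]
      have h1 : ∑ j, w i j ^ 2 = μ i := by
        have := F1 i i; rw [if_pos rfl, mul_one] at this
        rw [← this]; exact Finset.sum_congr rfl (fun j _ => by ring)
      rw [h1, hssq i, div_self h0]
  have huorth : ∀ i i', i ≠ i' → ∑ j, u i j * u i' j = 0 := by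
    intro i i' hne
    by_cases h0 : μ i = 0
    · simp [hu, h0]
    · by_cases h0' : μ i' = 0
      · simp [hu, h0']
      · simp only [hu, if_neg h0, if_neg h0', div_mul_div_comm]
        rw [← Finset.sum_div, F1 i i', if_neg hne]
        simp
  refine ⟨v, u, s, hs0, ?_, ?_, huorth, ?_, ?_, ?_, ?_⟩
  · intro i i' hne
    rw [hQcol i i', if_neg hne]
  · intro i
    have h1 := hQcol i i
    rw [if_pos rfl] at h1
    rw [show ∑ j, (v i j)^2 = ∑ j, v i j * v i j from
      Finset.sum_congr rfl (fun j _ => by ring), h1]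
  · intro i
    rw [hunorm i]
    split <;> norm_num
  · intro j k
    have : ∀ i, s i * u i j * v i k = w i j * v i k := fun i => by rw [hsu i j]
    rw [Finset.sum_congr rfl (fun i _ => this i)]
    have expand : ∀ i, w i j * v i k = ∑ t, W j t * (v i t * v i k) := by
      intro i
      rw [hw]
      show (∑ t, W j t * v i t) * v i k = _
      rw [Finset.sum_mul]
      exact Finset.sum_congr rfl (fun t _ => by ring)
    rw [Finset.sum_congr rfl (fun i _ => expand i), Finset.sum_comm]
    have : ∀ t, ∑ i, W j t * (v i t * v i k) = W j t * (if t = k then 1 else 0) := by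
      intro t
      rw [← Finset.mul_sum, hQrow t k]
    rw [Finset.sum_congr rfl (fun t _ => this t)]
    simp
  · intro i
    have inner : ∀ j, ∑ k, u i j * (W j k * v i k) = u i j * w i j := by
      intro j
      rw [← Finset.mul_sum]
      rfl
    rw [Finset.sum_congr rfl (fun j _ => inner j)]
    have : ∀ j, u i j * w i j = s i * (u i j)^2 := fun j => by rw [hsu i j]; ring
    rw [Finset.sum_congr rfl (fun j _ => this j), ← Finset.mul_sum, hunorm i]
    by_cases h0 : μ i = 0
    · simp [if_pos h0, hs, h0]
    · simp [if_neg h0]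
  · rfl

lemma UDV_entry {n d l : ℕ} (U : Matrix (Fin n) (Fin l) ℝ) (V : Matrix (Fin d) (Fin l) ℝ)
    (c : Fin l → ℝ) (i : Fin n) (j : Fin d) :
    (U * Matrix.diagonal c * Vᵀ) i j = ∑ t, U i t * c t * V j t := by
  rw [Matrix.mul_apply]
  refine Finset.sum_congr rfl (fun t _ => ?_)
  rw [Matrix.mul_diagonal, Matrix.transpose_apply]

lemma col_orth {n l : ℕ} {U : Matrix (Fin n) (Fin l) ℝ} (hU : Uᵀ * U = 1) (t t' : Fin l) :
    ∑ j, U j t * U j t' = if t = t' then 1 else 0 := by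
  have := congrFun (congrFun hU t) t'
  simpa [Matrix.mul_apply, Matrix.one_apply] using this

lemma T_expand {n d l : ℕ} (U : Matrix (Fin n) (Fin l) ℝ) (V : Matrix (Fin d) (Fin l) ℝ)
    (c : Fin l → ℝ) (x : Fin n → ℝ) (y : Fin d → ℝ) :
    ∑ j, ∑ k, x j * ((U * Matrix.diagonal c * Vᵀ) j k * y k)
      = ∑ t, c t * ((∑ j, x j * U j t) * (∑ k, y k * V k t)) := by
  calc ∑ j, ∑ k, x j * ((U * Matrix.diagonal c * Vᵀ) j k * y k)
      = ∑ j, ∑ k, ∑ t, x j * U j t * c t * V k t * y k := by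
        refine Finset.sum_congr rfl fun j _ => Finset.sum_congr rfl fun k _ => ?_
        rw [UDV_entry, Finset.sum_mul, Finset.mul_sum]
        exact Finset.sum_congr rfl fun t _ => by ring
    _ = ∑ t, ∑ j, ∑ k, x j * U j t * c t * V k t * y k := by
        rw [Finset.sum_congr rfl fun j (_ : j ∈ (Finset.univ : Finset (Fin n))) =>
          (Finset.sum_comm (s := Finset.univ) (t := Finset.univ)
            (f := fun k t => x j * U j t * c t * V k t * y k))]
        exact Finset.sum_comm (f := fun j t => ∑ k, x j * U j t * c t * V k t * y k)
    _ = ∑ t, c t * ((∑ j, x j * U j t) * (∑ k, y k * V k t)) := by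
        refine Finset.sum_congr rfl fun t _ => ?_
        rw [Finset.sum_mul_sum, Finset.mul_sum]
        refine Finset.sum_congr rfl fun j _ => ?_
        rw [Finset.mul_sum]
        exact Finset.sum_congr rfl fun k _ => by ring

lemma minner_UDV {n d l : ℕ} (U : Matrix (Fin n) (Fin l) ℝ) (V : Matrix (Fin d) (Fin l) ℝ)
    (a b : Fin l → ℝ) (hU : Uᵀ * U = 1) (hV : Vᵀ * V = 1) :
    minner (U * Matrix.diagonal a * Vᵀ) (U * Matrix.diagonal b * Vᵀ) = ∑ t, a t * b t := by
  unfold minner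
  calc ∑ i, ∑ j, (U * Matrix.diagonal a * Vᵀ) i j * (U * Matrix.diagonal b * Vᵀ) i j
      = ∑ i, ∑ j, ∑ t, (U i t * b t * V j t) * (U * Matrix.diagonal a * Vᵀ) i j := by
        refine Finset.sum_congr rfl fun i _ => Finset.sum_congr rfl fun j _ => ?_
        rw [UDV_entry U V b i j, Finset.mul_sum]
        exact Finset.sum_congr rfl fun t _ => by ring
    _ = ∑ t, ∑ i, ∑ j, (U i t * b t * V j t) * (U * Matrix.diagonal a * Vᵀ) i j := by
        rw [Finset.sum_congr rfl fun i (_ : i ∈ (Finset.univ : Finset (Fin n))) =>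
          (Finset.sum_comm (s := Finset.univ) (t := Finset.univ)
            (f := fun j t => (U i t * b t * V j t) * (U * Matrix.diagonal a * Vᵀ) i j))]
        exact Finset.sum_comm (f := fun i t => ∑ j, (U i t * b t * V j t) * (U * Matrix.diagonal a * Vᵀ) i j)
    _ = ∑ t, b t * ∑ i, ∑ j, U i t * ((U * Matrix.diagonal a * Vᵀ) i j * V j t) := by
        refine Finset.sum_congr rfl fun t _ => ?_
        rw [Finset.mul_sum]
        refine Finset.sum_congr rfl fun i _ => ?_
        rw [Finset.mul_sum]
        exact Finset.sum_congr rfl fun j _ => by ring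
    _ = ∑ t, b t * ∑ t', a t' * ((∑ i, U i t * U i t') * (∑ j, V j t * V j t')) := by
        refine Finset.sum_congr rfl fun t _ => ?_
        rw [T_expand U V a (fun i => U i t) (fun j => V j t)]
    _ = ∑ t, a t * b t := by
        refine Finset.sum_congr rfl fun t _ => ?_
        rw [Finset.sum_eq_single t]
        · rw [col_orth hU t t, col_orth hV t t, if_pos rfl]; ring
        · intro t' _ hne
          rw [col_orth hU t t', col_orth hV t t', if_neg (fun h => hne h.symm)]
          ring
        · intro ht; exact absurd (Finset.mem_univ t) ht

lemma dual_bound {n d l : ℕ} (U : Matrix (Fin n) (Fin l) ℝ) (V : Matrix (Fin d) (Fin l) ℝ)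
    (c : Fin l → ℝ) (hU : Uᵀ * U = 1) (hV : Vᵀ * V = 1)
    (hc0 : ∀ t, 0 ≤ c t) (hc1 : ∀ t, c t ≤ 1)
    (W : Matrix (Fin n) (Fin d) ℝ) :
    minner (U * Matrix.diagonal c * Vᵀ) W ≤ nuclearNorm W := by
  obtain ⟨v, u, s, hs0, hvo, hvn, huo, hun, hrec, -, hnn⟩ := svd_core W
  set G := U * Matrix.diagonal c * Vᵀ with hG
  have key : minner G W = ∑ i, s i * (∑ j, ∑ k, u i j * (G j k * v i k)) := by
    unfold minner
    calc ∑ j, ∑ k, G j k * W j k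
        = ∑ j, ∑ k, ∑ i, s i * (u i j * (G j k * v i k)) := by
          refine Finset.sum_congr rfl fun j _ => Finset.sum_congr rfl fun k _ => ?_
          rw [hrec j k, Finset.mul_sum]
          exact Finset.sum_congr rfl fun i _ => by ring
      _ = ∑ i, ∑ j, ∑ k, s i * (u i j * (G j k * v i k)) := by
          rw [Finset.sum_congr rfl fun j (_ : j ∈ (Finset.univ : Finset (Fin n))) =>
            (Finset.sum_comm (s := Finset.univ) (t := Finset.univ)
              (f := fun k i => s i * (u i j * (G j k * v i k))))]
          exact Finset.sum_comm (f := fun j i => ∑ k, s i * (u i j * (G j k * v i k)))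
      _ = ∑ i, s i * (∑ j, ∑ k, u i j * (G j k * v i k)) := by
          refine Finset.sum_congr rfl fun i _ => ?_
          rw [Finset.mul_sum]
          exact Finset.sum_congr rfl fun j _ => by rw [Finset.mul_sum]
  have Tbound : ∀ i, ∑ j, ∑ k, u i j * (G j k * v i k) ≤ 1 := by
    intro i
    rw [hG, T_expand U V c (u i) (v i)]
    set α : Fin l → ℝ := fun t => ∑ j, u i j * U j t with hα
    set β : Fin l → ℝ := fun t => ∑ k, v i k * V k t with hβ
    have hαb : ∑ t, (α t)^2 ≤ 1 := by
      have hb := bessel (fun t j => U j t)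
        (fun t t' hne => by
          rw [show (∑ j, U j t * U j t') = _ from col_orth hU t t', if_neg hne])
        (fun t => le_of_eq (by
          have h1 := col_orth hU t t
          rw [if_pos rfl] at h1
          rw [show ∑ j, (U j t)^2 = ∑ j, U j t * U j t from
            Finset.sum_congr rfl fun j _ => by ring, h1]))
        (u i)
      exact le_trans hb (hun i)
    have hβb : ∑ t, (β t)^2 ≤ 1 := by
      have hb := bessel (fun t k => V k t)
        (fun t t' hne => by
          rw [show (∑ k, V k t * V k t') = _ from col_orth hV t t', if_neg hne])
        (fun t => le_of_eq (by
          have h1 := col_orth hV t t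
          rw [if_pos rfl] at h1
          rw [show ∑ k, (V k t)^2 = ∑ k, V k t * V k t from
            Finset.sum_congr rfl fun k _ => by ring, h1]))
        (v i)
      exact le_trans hb (hvn i)
    calc ∑ t, c t * (α t * β t) ≤ ∑ t, |α t| * |β t| := by
          refine Finset.sum_le_sum fun t _ => ?_
          calc c t * (α t * β t) ≤ |c t * (α t * β t)| := le_abs_self _
            _ = c t * (|α t| * |β t|) := by
                rw [abs_mul, abs_mul, abs_of_nonneg (hc0 t)]
            _ ≤ 1 * (|α t| * |β t|) := by
                refine mul_le_mul_of_nonneg_right (hc1 t) (by positivity)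
            _ = |α t| * |β t| := one_mul _
      _ ≤ 1 := cs_abs_le_one α β hαb hβb
  rw [key, hnn]
  refine Finset.sum_le_sum fun i _ => ?_
  calc s i * (∑ j, ∑ k, u i j * (G j k * v i k)) ≤ s i * 1 :=
        mul_le_mul_of_nonneg_left (Tbound i) (hs0 i)
    _ = s i := mul_one _

lemma nn_UDV_le {n d l : ℕ} (U : Matrix (Fin n) (Fin l) ℝ) (V : Matrix (Fin d) (Fin l) ℝ)
    (m : Fin l → ℝ) (hU : Uᵀ * U = 1) (hV : Vᵀ * V = 1) (hm : ∀ t, 0 ≤ m t) :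
    nuclearNorm (U * Matrix.diagonal m * Vᵀ) ≤ ∑ t, m t := by
  set D := U * Matrix.diagonal m * Vᵀ with hD
  obtain ⟨v, u, s, hs0, hvo, hvn, huo, hun, hrec, hsval, hnn⟩ := svd_core D
  rw [hnn]
  have hsval' : ∀ i, s i = ∑ t, m t * ((∑ j, u i j * U j t) * (∑ k, v i k * V k t)) := by
    intro i
    rw [hsval i, hD, T_expand U V m (u i) (v i)]
  calc ∑ i, s i = ∑ i, ∑ t, m t * ((∑ j, u i j * U j t) * (∑ k, v i k * V k t)) :=
        Finset.sum_congr rfl fun i _ => hsval' i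
    _ = ∑ t, m t * ∑ i, (∑ j, u i j * U j t) * (∑ k, v i k * V k t) := by
        rw [Finset.sum_comm]
        exact Finset.sum_congr rfl fun t _ => by rw [Finset.mul_sum]
    _ ≤ ∑ t, m t * 1 := by
        refine Finset.sum_le_sum fun t _ => ?_
        refine mul_le_mul_of_nonneg_left ?_ (hm t)
        set α : Fin d → ℝ := fun i => ∑ j, u i j * U j t with hα
        set β : Fin d → ℝ := fun i => ∑ k, v i k * V k t with hβ
        have hαb : ∑ i, (α i)^2 ≤ 1 := by
          have hb := bessel u huo hun (fun j => U j t)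
          refine le_trans (le_of_eq ?_) (le_trans hb ?_)
          · exact Finset.sum_congr rfl fun i _ => by
              rw [hα]
              congr 1
              exact Finset.sum_congr rfl fun j _ => by ring
          · have h1 := col_orth hU t t
            rw [if_pos rfl] at h1
            rw [show ∑ j, (U j t)^2 = ∑ j, U j t * U j t from
              Finset.sum_congr rfl fun j _ => by ring, h1]
        have hβb : ∑ i, (β i)^2 ≤ 1 := by
          have hb := bessel v hvo hvn (fun k => V k t)
          refine le_trans (le_of_eq ?_) (le_trans hb ?_)
          · exact Finset.sum_congr rfl fun i _ => by
              rw [hβ]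
              congr 1
              exact Finset.sum_congr rfl fun k _ => by ring
          · have h1 := col_orth hV t t
            rw [if_pos rfl] at h1
            rw [show ∑ k, (V k t)^2 = ∑ k, V k t * V k t from
              Finset.sum_congr rfl fun k _ => by ring, h1]
        calc ∑ i, α i * β i ≤ ∑ i, |α i| * |β i| :=
              Finset.sum_le_sum fun i _ => by
                calc α i * β i ≤ |α i * β i| := le_abs_self _
                  _ = |α i| * |β i| := abs_mul _ _
          _ ≤ 1 := cs_abs_le_one α β hαb hβb
    _ = ∑ t, m t := by simp


lemma frobSq_nonneg {n d : ℕ} (X : Matrix (Fin n) (Fin d) ℝ) : 0 ≤ frobSq X := by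
  unfold frobSq; positivity

lemma frobSq_eq_zero {n d : ℕ} {X : Matrix (Fin n) (Fin d) ℝ} (h : frobSq X = 0) : X = 0 := by
  unfold frobSq at h
  ext i j
  have h1 : ∀ i ∈ Finset.univ, (0:ℝ) ≤ ∑ j, (X i j)^2 := fun i _ => by positivity
  have h2 := (Finset.sum_eq_zero_iff_of_nonneg h1).mp h i (Finset.mem_univ i)
  have h3 : ∀ j ∈ Finset.univ, (0:ℝ) ≤ (X i j)^2 := fun j _ => by positivity
  have h4 := (Finset.sum_eq_zero_iff_of_nonneg h3).mp h2 j (Finset.mem_univ j)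
  simpa using pow_eq_zero_iff (n := 2) (by norm_num) |>.mp h4

lemma frobSq_decomp {n d : ℕ} (X Y Z : Matrix (Fin n) (Fin d) ℝ) :
    frobSq (X - Z) = frobSq (X - Y) + frobSq (Y - Z) + 2 * minner (X - Y) (Y - Z) := by
  unfold frobSq minner
  rw [Finset.mul_sum, ← Finset.sum_add_distrib, ← Finset.sum_add_distrib]
  refine Finset.sum_congr rfl fun i _ => ?_
  rw [Finset.mul_sum, ← Finset.sum_add_distrib, ← Finset.sum_add_distrib]
  refine Finset.sum_congr rfl fun j _ => ?_
  simp only [Matrix.sub_apply]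
  ring

/-- the W̃-subproblem is solved by singular value soft-thresholding.
Let γ ≥ 0, ρ₂ > 0, and A ∈ ℝ^{n×d} with SVD A = U Σ Vᵀ, Σ = diag(σ₁,…,σ_l) containing
the positive singular values.  The unique minimizer of W̃ ↦ γ‖W̃‖_* + (ρ₂/2)‖W̃ − A‖_F²
is U diag(max{σᵢ − γ/ρ₂, 0}) Vᵀ. -/
theorem svt_unique_minimizer {n d l : ℕ} (γ ρ₂ : ℝ) (hγ : 0 ≤ γ) (hρ₂ : 0 < ρ₂)
    (A : Matrix (Fin n) (Fin d) ℝ)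
    (U : Matrix (Fin n) (Fin l) ℝ) (V : Matrix (Fin d) (Fin l) ℝ) (σ : Fin l → ℝ)
    (hU : Uᵀ * U = 1) (hV : Vᵀ * V = 1) (hσ : ∀ i, 0 < σ i)
    (hA : A = U * Matrix.diagonal σ * Vᵀ) :
    let f : Matrix (Fin n) (Fin d) ℝ → ℝ :=
      fun Wt => γ * nuclearNorm Wt + (ρ₂ / 2) * frobSq (Wt - A)
    let D : Matrix (Fin n) (Fin d) ℝ :=
      U * Matrix.diagonal (fun i => max (σ i - γ / ρ₂) 0) * Vᵀ
    (∀ Wt, f D ≤ f Wt) ∧ (∀ Wt, (∀ Wt', f Wt ≤ f Wt') → Wt = D) := by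
  intro f D
  have hfdef : ∀ X, f X = γ * nuclearNorm X + (ρ₂ / 2) * frobSq (X - A) := fun X => rfl
  set τ : ℝ := γ / ρ₂ with hτdef
  set m : Fin l → ℝ := fun t => max (σ t - τ) 0 with hmdef
  have hDdef : D = U * Matrix.diagonal m * Vᵀ := rfl
  clear_value f D
  have hτ0 : 0 ≤ τ := div_nonneg hγ hρ₂.le
  have hm0 : ∀ t, 0 ≤ m t := fun t => le_max_right _ _
  set c : Fin l → ℝ := fun t => if γ = 0 then 0 else min (σ t) τ / τ with hcdef
  set G : Matrix (Fin n) (Fin d) ℝ := U * Matrix.diagonal c * Vᵀ with hGdef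
  have hτpos : γ ≠ 0 → 0 < τ := fun h =>
    div_pos (lt_of_le_of_ne hγ (Ne.symm h)) hρ₂
  have hc0 : ∀ t, 0 ≤ c t := by
    intro t
    simp only [hcdef]
    split
    · exact le_refl 0
    · exact div_nonneg (le_min (hσ t).le hτ0) hτ0
  have hc1 : ∀ t, c t ≤ 1 := by
    intro t
    simp only [hcdef]
    split
    · norm_num
    · next h => exact div_le_one (hτpos h) |>.mpr (min_le_right _ _)
  have hσm : ∀ t, σ t - m t = min (σ t) τ := by
    intro t
    simp only [hmdef]
    rcases le_total (σ t) τ with hle | hle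
    · rw [max_eq_right (by linarith), min_eq_left hle]; ring
    · rw [max_eq_left (by linarith), min_eq_right hle]; ring
  have hγc : ∀ t, γ * c t = ρ₂ * (σ t - m t) := by
    intro t
    rw [hσm t]
    simp only [hcdef]
    by_cases h0 : γ = 0
    · rw [if_pos h0, h0]
      have : min (σ t) τ = 0 := by
        rw [hτdef, h0, zero_div]
        exact min_eq_right (hσ t).le
      rw [this]; ring
    · rw [if_neg h0]
      have hτne : τ ≠ 0 := ne_of_gt (hτpos h0)
      have hγτ : γ = ρ₂ * τ := by rw [hτdef]; field_simp
      rw [hγτ]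
      field_simp
  have hDsub : D - A = U * Matrix.diagonal (fun t => m t - σ t) * Vᵀ := by
    rw [hDdef, hA]
    have : Matrix.diagonal (fun t => m t - σ t)
        = Matrix.diagonal m - Matrix.diagonal σ := by
      rw [← Matrix.diagonal_sub]
    rw [this, Matrix.mul_sub, Matrix.sub_mul]
  have hDA : ∀ i j, ρ₂ * ((D - A) i j) = -γ * G i j := by
    intro i j
    rw [hDsub, hGdef, UDV_entry, UDV_entry, Finset.mul_sum, Finset.mul_sum]
    refine Finset.sum_congr rfl fun t _ => ?_
    linear_combination (U i t * V j t) * hγc t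
  -- the key inequality
  have key : ∀ W, f D + (ρ₂ / 2) * frobSq (W - D) ≤ f W := by
    intro W
    have e1 : (ρ₂/2) * frobSq (W - A)
        = (ρ₂/2) * frobSq (W - D) + (ρ₂/2) * frobSq (D - A)
          + ρ₂ * minner (W - D) (D - A) := by
      rw [frobSq_decomp W D A]; ring
    have e2 : ρ₂ * minner (W - D) (D - A) = γ * minner G D - γ * minner G W := by
      unfold minner
      rw [Finset.mul_sum, Finset.mul_sum, Finset.mul_sum, ← Finset.sum_sub_distrib]
      refine Finset.sum_congr rfl fun i _ => ?_
      rw [Finset.mul_sum, Finset.mul_sum, Finset.mul_sum, ← Finset.sum_sub_distrib]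
      refine Finset.sum_congr rfl fun j _ => ?_
      have h1 := hDA i j
      simp only [Matrix.sub_apply] at h1 ⊢
      linear_combination (W i j - D i j) * h1
    have e3 : γ * nuclearNorm D + γ * minner G W ≤ γ * minner G D + γ * nuclearNorm W := by
      rcases eq_or_lt_of_le hγ with h0 | hpos
      · rw [← h0]; ring_nf; rfl
      · have hγne : γ ≠ 0 := ne_of_gt hpos
        have t1 : nuclearNorm D ≤ ∑ t, m t := by
          rw [hDdef]; exact nn_UDV_le U V m hU hV hm0
        have t2 : minner G D = ∑ t, m t := by
          rw [hGdef, hDdef, minner_UDV U V c m hU hV]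
          refine Finset.sum_congr rfl fun t _ => ?_
          by_cases hle : σ t ≤ τ
          · have : m t = 0 := by
              simp only [hmdef]; exact max_eq_right (by linarith)
            rw [this]; ring
          · push_neg at hle
            have hc : c t = 1 := by
              simp only [hcdef, if_neg hγne]
              rw [min_eq_right hle.le, div_self (ne_of_gt (hτpos hγne))]
            rw [hc, one_mul]
        have t3 : minner G W ≤ nuclearNorm W := by
          rw [hGdef]; exact dual_bound U V c hU hV hc0 hc1 W
        have h4 : nuclearNorm D + minner G W ≤ minner G D + nuclearNorm W := by
          linarith
        nlinarith [mul_le_mul_of_nonneg_left h4 hγ]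
    rw [hfdef W, hfdef D, e1]
    linarith [e2, e3]
  constructor
  · intro Wt
    have := key Wt
    have h0 := frobSq_nonneg (Wt - D)
    nlinarith [mul_nonneg (by linarith : (0:ℝ) ≤ ρ₂ / 2) h0]
  · intro Wt hmin
    have h1 := key Wt
    have h2 := hmin D
    have h3 := frobSq_nonneg (Wt - D)
    have h4 : frobSq (Wt - D) = 0 := by
      by_contra hne
      have hpos : 0 < frobSq (Wt - D) := lt_of_le_of_ne h3 (Ne.symm hne)
      nlinarith [mul_pos (by linarith : (0:ℝ) < ρ₂ / 2) hpos]
    have := frobSq_eq_zero h4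
    exact sub_eq_zero.mp this
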